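/- In the matrix-decomposition setting below, for every i ∈ I one has [L, V_ii ⊗ Λ(i,i)] ⊆ L, i.e. the commutator of any element of L with any element of V_ii ⊗ Λ(i,i) lies in L. -/

import Mathlib

/-! Statement 13: in the matrix-decomposition setting, `[L, V_ii ⊗ Λ(i,i)] ⊆ L` for all `i ∈ I`. -/

open scoped TensorProduct DirectSum

universe u v w

/-- `n` extended to `Î = I ∪ {0}` (`none` playing the role of `0`), with `n_0 = 1`. -/
abbrev nopt {I : Type} (n : I → ℕ) : Option I → ℕ
  | none => 1
  | some i => n i

variable (F : Type u) [Field F] [IsAlgClosed F]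
  {I : Type} [Fintype I] [DecidableEq I] [Nonempty I] {n : I → ℕ}
  {Λ : Option I → Option I → Type v}
  [∀ i j, AddCommGroup (Λ i j)] [∀ i j, Module F (Λ i j)]
  {A : Type w} [NonUnitalRing A] [Module F A] [SMulCommClass F A A] [IsScalarTower F A A]

/-- The image in `A` of an element `u ∈ V_ij ⊗ Λ(i,j)` under the identification `ψ`
of `A` with `⊕_{i,j ∈ Î} V_ij ⊗ Λ(i,j)`. -/
noncomputable def emb (ψ : (⨁ p : Option I × Option I,
      Matrix (Fin (nopt n p.1)) (Fin (nopt n p.2)) F ⊗[F] Λ p.1 p.2) ≃ₗ[F] A)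
    (p : Option I × Option I)
    (u : Matrix (Fin (nopt n p.1)) (Fin (nopt n p.2)) F ⊗[F] Λ p.1 p.2) : A :=
  ψ (DirectSum.lof F (Option I × Option I)
    (fun q => Matrix (Fin (nopt n q.1)) (Fin (nopt n q.2)) F ⊗[F] Λ q.1 q.2) p u)

/-- The image in `A` of a pure tensor `X ⊗ a ∈ V_ij ⊗ Λ(i,j)`. -/
noncomputable def elt (ψ : (⨁ p : Option I × Option I,
      Matrix (Fin (nopt n p.1)) (Fin (nopt n p.2)) F ⊗[F] Λ p.1 p.2) ≃ₗ[F] A)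
    (i j : Option I) (X : Matrix (Fin (nopt n i)) (Fin (nopt n j)) F) (a : Λ i j) : A :=
  emb F ψ (i, j) (X ⊗ₜ a)

/-- The union of the subspaces `V'_ij ⊗ Λ(i,j)`, `(i,j) ≠ (0,0)`, where `V'_ii` consists
of the trace-zero matrices and `V'_ij = V_ij` for `i ≠ j`. -/
def lieGens (ψ : (⨁ p : Option I × Option I,
      Matrix (Fin (nopt n p.1)) (Fin (nopt n p.2)) F ⊗[F] Λ p.1 p.2) ≃ₗ[F] A) : Set A :=
  {x | ∃ (i j : Option I) (X : Matrix (Fin (nopt n i)) (Fin (nopt n j)) F) (a : Λ i j),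
      i ≠ j ∧ x = elt F ψ i j X a} ∪
  {x | ∃ (i : I) (X : Matrix (Fin (n i)) (Fin (n i)) F) (a : Λ (some i) (some i)),
      Matrix.trace X = 0 ∧ x = elt F ψ (some i) (some i) X a}

/-- `L`: the Lie subalgebra of `A` (as a subspace closed under commutators) generated by
the subspaces `V'_ij ⊗ Λ(i,j)` over all `(i,j) ≠ (0,0)`. -/
def Lsub (ψ : (⨁ p : Option I × Option I,
      Matrix (Fin (nopt n p.1)) (Fin (nopt n p.2)) F ⊗[F] Λ p.1 p.2) ≃ₗ[F] A) :
    Submodule F A :=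
  sInf {J : Submodule F A | lieGens F ψ ⊆ J ∧ ∀ x ∈ J, ∀ y ∈ J, x * y - y * x ∈ J}

variable (mu : ∀ i j k : Option I, Λ i j →ₗ[F] Λ j k →ₗ[F] Λ i k)
  (ψ : (⨁ p : Option I × Option I,
      Matrix (Fin (nopt n p.1)) (Fin (nopt n p.2)) F ⊗[F] Λ p.1 p.2) ≃ₗ[F] A)

section AuxLemmas

lemma emb_add' (p : Option I × Option I)
    (u v : Matrix (Fin (nopt n p.1)) (Fin (nopt n p.2)) F ⊗[F] Λ p.1 p.2) :
    emb F ψ p (u + v) = emb F ψ p u + emb F ψ p v := by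
  simp [emb]

lemma emb_zero' (p : Option I × Option I) : emb F ψ p (0 : _ ⊗[F] Λ p.1 p.2) = 0 := by
  simp [emb]

lemma elt_add_left' (i j : Option I) (X Y : Matrix (Fin (nopt n i)) (Fin (nopt n j)) F)
    (a : Λ i j) : elt F ψ i j (X + Y) a = elt F ψ i j X a + elt F ψ i j Y a := by
  simp [elt, TensorProduct.add_tmul, emb]

lemma elt_sub_left' (i j : Option I) (X Y : Matrix (Fin (nopt n i)) (Fin (nopt n j)) F)
    (a : Λ i j) : elt F ψ i j (X - Y) a = elt F ψ i j X a - elt F ψ i j Y a := by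
  simp [elt, TensorProduct.sub_tmul, emb]

lemma elt_smul_left' (i j : Option I) (c : F) (X : Matrix (Fin (nopt n i)) (Fin (nopt n j)) F)
    (a : Λ i j) : elt F ψ i j (c • X) a = c • elt F ψ i j X a := by
  simp [elt, emb, ← TensorProduct.smul_tmul']

lemma elt_sub_right' (i j : Option I) (X : Matrix (Fin (nopt n i)) (Fin (nopt n j)) F)
    (a b : Λ i j) : elt F ψ i j X (a - b) = elt F ψ i j X a - elt F ψ i j X b := by
  simp [elt, TensorProduct.tmul_sub, emb]

lemma gens_subset_Lsub' : lieGens F ψ ⊆ (Lsub F ψ : Set A) := by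
  intro x hx
  rw [Lsub, SetLike.mem_coe, Submodule.mem_sInf]
  exact fun J hJ => hJ.1 hx

lemma Lsub_comm' {x y : A} (hx : x ∈ Lsub F ψ) (hy : y ∈ Lsub F ψ) :
    x * y - y * x ∈ Lsub F ψ := by
  rw [Lsub, Submodule.mem_sInf] at *
  exact fun J hJ => hJ.2 x (hx J hJ) y (hy J hJ)

end AuxLemmas

theorem commutator_Lsub_Vii_mem_Lsub
    -- sizes: `n_i ≥ 2`, and `n_i ≥ 3` in characteristic 2
    (hn2 : ∀ i : I, 2 ≤ n i) (hn3 : ringChar F = 2 → ∀ i : I, 3 ≤ n i)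
    -- `Λ` is an associative algebra with componentwise products `Λ(i,j)Λ(j,k) ⊆ Λ(i,k)`
    (hassoc : ∀ (i j k l : Option I) (a : Λ i j) (b : Λ j k) (c : Λ k l),
      mu i k l (mu i j k a b) c = mu i j l a (mu j k l b c))
    -- each `Λ(i,i)`, `i ∈ I`, has an identity element `1_i`
    (one : ∀ i : I, Λ (some i) (some i))
    (hone_left : ∀ (i : I) (j : Option I) (a : Λ (some i) j),
      mu (some i) (some i) j (one i) a = a)
    (hone_right : ∀ (i : I) (j : Option I) (a : Λ j (some i)),
      mu j (some i) (some i) a (one i) = a)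
    -- `Λ(0,0) = Σ_{i ∈ I} Λ(0,i)Λ(i,0)`
    (h00 : ∀ x : Λ none none, x ∈ Submodule.span F
      {y : Λ none none | ∃ (i : I) (a : Λ none (some i)) (b : Λ (some i) none),
        y = mu none (some i) none a b})
    -- the product of `A`: `(X ⊗ λ)(Y ⊗ μ) = XY ⊗ λμ` for matching inner indices …
    (hmul : ∀ (i j k : Option I) (X : Matrix (Fin (nopt n i)) (Fin (nopt n j)) F)
      (a : Λ i j) (Y : Matrix (Fin (nopt n j)) (Fin (nopt n k)) F) (b : Λ j k),
      elt F ψ i j X a * elt F ψ j k Y b = elt F ψ i k (X * Y) (mu i j k a b))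
    -- … and `0` otherwise
    (hmul0 : ∀ (i j s t : Option I), j ≠ s →
      ∀ (X : Matrix (Fin (nopt n i)) (Fin (nopt n j)) F) (a : Λ i j)
        (Y : Matrix (Fin (nopt n s)) (Fin (nopt n t)) F) (b : Λ s t),
      elt F ψ i j X a * elt F ψ s t Y b = 0)
    :
    -- the commutator of any element of `L` with any element of `V_ii ⊗ Λ(i,i)` lies in `L`
    ∀ (i : I), ∀ x ∈ Lsub F ψ,
      ∀ u : Matrix (Fin (n i)) (Fin (n i)) F ⊗[F] Λ (some i) (some i),
      x * emb F ψ (some i, some i) u - emb F ψ (some i, some i) u * x ∈ Lsub F ψ := by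
  classical
  set L := Lsub F ψ with hLdef
  have hgens : lieGens F ψ ⊆ (L : Set A) := gens_subset_Lsub' F ψ
  have hLcomm : ∀ x ∈ L, ∀ y ∈ L, x * y - y * x ∈ L := fun x hx y hy => Lsub_comm' F ψ hx hy
  -- key identity: E_zz ⊗ (λb - bλ) ∈ L for distinct z, w
  have commE : ∀ (i : I) (z w : Fin (nopt n (some i))), z ≠ w →
      ∀ (lam b : Λ (some i) (some i)),
      elt F ψ (some i) (some i) (Matrix.single z z 1)
        (mu (some i) (some i) (some i) lam b - mu (some i) (some i) (some i) b lam) ∈ L := by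
    intro i z w hzw lam b
    set g1 := elt F ψ (some i) (some i) (Matrix.single w z 1) lam with hg1
    set g2 := elt F ψ (some i) (some i) (Matrix.single z w 1) b with hg2
    have hg1L : g1 ∈ L := hgens (Or.inr ⟨i, Matrix.single w z 1, lam, Matrix.trace_single_eq_of_ne w z (1 : F) (Ne.symm hzw), rfl⟩)
    have hg2L : g2 ∈ L := hgens (Or.inr ⟨i, Matrix.single z w 1, b, Matrix.trace_single_eq_of_ne z w (1 : F) hzw, rfl⟩)
    have hbr : g1 * g2 - g2 * g1 ∈ L := hLcomm _ hg1L _ hg2L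
    have hcalc : g1 * g2 - g2 * g1 =
        elt F ψ (some i) (some i) (Matrix.single w w 1)
          (mu (some i) (some i) (some i) lam b)
        - elt F ψ (some i) (some i) (Matrix.single z z 1)
          (mu (some i) (some i) (some i) b lam) := by
      rw [hg1, hg2, hmul, hmul, Matrix.single_mul_single_same, Matrix.single_mul_single_same,
        one_mul]
    have hd : elt F ψ (some i) (some i)
        (Matrix.single w w 1 - Matrix.single z z 1)
        (mu (some i) (some i) (some i) lam b) ∈ L := by
      refine hgens (Or.inr ⟨i, _, _, ?_, rfl⟩)
      simp [Matrix.trace_sub]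
    have heq : elt F ψ (some i) (some i) (Matrix.single z z 1)
        (mu (some i) (some i) (some i) lam b - mu (some i) (some i) (some i) b lam)
        = (g1 * g2 - g2 * g1) - elt F ψ (some i) (some i)
            (Matrix.single w w 1 - Matrix.single z z 1)
            (mu (some i) (some i) (some i) lam b) := by
      rw [hcalc, elt_sub_left', elt_sub_right']
      abel
    rw [heq]
    exact L.sub_mem hbr hd
  -- brackets of generators with pure tensors in V_ii ⊗ Λ(i,i)
  have key : ∀ g ∈ lieGens F ψ, ∀ (i : I)
      (Y : Matrix (Fin (nopt n (some i))) (Fin (nopt n (some i))) F)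
      (a : Λ (some i) (some i)),
      g * elt F ψ (some i) (some i) Y a - elt F ψ (some i) (some i) Y a * g ∈ L := by
    rintro g (⟨s, t, X, lam, hst, rfl⟩ | ⟨i', X, lam, htr, rfl⟩) i Y a
    · by_cases ht : t = some i
      · subst ht
        have hs : s ≠ some i := hst
        rw [hmul, hmul0 (some i) (some i) s (some i) (fun h => hs h.symm)]
        rw [sub_zero]
        exact hgens (Or.inl ⟨s, some i, _, _, hs, rfl⟩)
      · by_cases hs : s = some i
        · subst hs
          rw [hmul0 (some i) t (some i) (some i) ht, hmul, zero_sub]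
          exact L.neg_mem (hgens (Or.inl ⟨some i, t, _, _, fun h => ht h.symm, rfl⟩))
        · rw [hmul0 s t (some i) (some i) ht,
            hmul0 (some i) (some i) s t (fun h => hs h.symm), sub_zero]
          exact L.zero_mem
    · by_cases hii : i' = i
      · subst hii
        rw [hmul, hmul]
        set z : Fin (nopt n (some i')) := ⟨0, Nat.lt_of_lt_of_le Nat.zero_lt_two (hn2 i')⟩ with hz
        set w : Fin (nopt n (some i')) := ⟨1, Nat.lt_of_lt_of_le Nat.one_lt_two (hn2 i')⟩ with hw
        have hzw : z ≠ w := by simp [hz, hw, Fin.ext_iff]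
        set c := Matrix.trace (X * Y) with hc
        set E : Matrix (Fin (nopt n (some i'))) (Fin (nopt n (some i'))) F :=
          Matrix.single z z 1 with hE
        have htrE : Matrix.trace E = 1 := Matrix.trace_single_eq_same _ _
        have hdecomp :
            elt F ψ (some i') (some i') (X * Y) (mu (some i') (some i') (some i') lam a)
            - elt F ψ (some i') (some i') (Y * X) (mu (some i') (some i') (some i') a lam)
            = (elt F ψ (some i') (some i') (X * Y - c • E)
                  (mu (some i') (some i') (some i') lam a)
              - elt F ψ (some i') (some i') (Y * X - c • E)
                  (mu (some i') (some i') (some i') a lam))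
              + c • elt F ψ (some i') (some i') E
                  (mu (some i') (some i') (some i') lam a
                    - mu (some i') (some i') (some i') a lam) := by
          rw [elt_sub_left', elt_sub_left', elt_sub_right', elt_smul_left', elt_smul_left',
            smul_sub]
          abel
        rw [hdecomp]
        refine L.add_mem (L.sub_mem ?_ ?_) (L.smul_mem c (commE i' z w hzw lam a))
        · refine hgens (Or.inr ⟨i', _, _, ?_, rfl⟩)
          rw [Matrix.trace_sub, Matrix.trace_smul, htrE, smul_eq_mul, mul_one, ← hc, sub_self]
        · refine hgens (Or.inr ⟨i', _, _, ?_, rfl⟩)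
          rw [Matrix.trace_sub, Matrix.trace_smul, htrE, smul_eq_mul, mul_one,
            Matrix.trace_mul_comm, ← hc, sub_self]
      · have h1 : some i' ≠ some i := fun h => hii (Option.some_injective _ h)
        rw [hmul0 (some i') (some i') (some i) (some i) h1,
          hmul0 (some i) (some i) (some i') (some i') (Ne.symm h1), sub_zero]
        exact L.zero_mem
  -- the submodule K
  let K : Submodule F A :=
    { carrier := {x | x ∈ L ∧ ∀ (i : I)
        (u : Matrix (Fin (nopt n (some i))) (Fin (nopt n (some i))) F ⊗[F] Λ (some i) (some i)),
        x * emb F ψ (some i, some i) u - emb F ψ (some i, some i) u * x ∈ L}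
      add_mem' := by
        rintro x y ⟨hxL, hx⟩ ⟨hyL, hy⟩
        refine ⟨L.add_mem hxL hyL, fun i u => ?_⟩
        have : (x + y) * emb F ψ (some i, some i) u - emb F ψ (some i, some i) u * (x + y)
            = (x * emb F ψ (some i, some i) u - emb F ψ (some i, some i) u * x)
              + (y * emb F ψ (some i, some i) u - emb F ψ (some i, some i) u * y) := by
          noncomm_ring
        rw [this]
        exact L.add_mem (hx i u) (hy i u)
      zero_mem' := by
        refine ⟨L.zero_mem, fun i u => ?_⟩
        simp
      smul_mem' := by
        rintro c x ⟨hxL, hx⟩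
        refine ⟨L.smul_mem c hxL, fun i u => ?_⟩
        have : (c • x) * emb F ψ (some i, some i) u - emb F ψ (some i, some i) u * (c • x)
            = c • (x * emb F ψ (some i, some i) u - emb F ψ (some i, some i) u * x) := by
          rw [smul_mul_assoc, mul_smul_comm, smul_sub]
        rw [this]
        exact L.smul_mem c (hx i u) }
  have hK : K ∈ {J : Submodule F A |
      lieGens F ψ ⊆ J ∧ ∀ x ∈ J, ∀ y ∈ J, x * y - y * x ∈ J} := by
    constructor
    · intro g hg
      refine ⟨hgens hg, fun i u => ?_⟩
      induction u using TensorProduct.induction_on with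
      | zero => simp [emb_zero' F ψ]
      | tmul Y a => exact key g hg i Y a
      | add u v hu hv =>
        have : g * emb F ψ (some i, some i) (u + v)
            - emb F ψ (some i, some i) (u + v) * g
            = (g * emb F ψ (some i, some i) u - emb F ψ (some i, some i) u * g)
              + (g * emb F ψ (some i, some i) v - emb F ψ (some i, some i) v * g) := by
          rw [emb_add' F ψ]; noncomm_ring
        rw [this]
        exact L.add_mem hu hv
    · rintro x ⟨hxL, hx⟩ y ⟨hyL, hy⟩
      refine ⟨hLcomm x hxL y hyL, fun i u => ?_⟩
      set e := emb F ψ (some i, some i) u with he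
      have : (x * y - y * x) * e - e * (x * y - y * x)
          = (x * (y * e - e * y) - (y * e - e * y) * x)
            + ((x * e - e * x) * y - y * (x * e - e * x)) := by
        noncomm_ring
      rw [this]
      exact L.add_mem (hLcomm _ hxL _ (hy i u)) (hLcomm _ (hx i u) _ hyL)
  have hle : L ≤ K := sInf_le hK
  intro i x hx u
  exact (hle hx).2 i u
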